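/- Let K be a field, n ≥ 2, and p(x_1,...,x_m) a noncommutative polynomial with zero constant term over K of order r with 1 < r < n − 1. Then the image p(T_n(K)) is contained in T_n(K)^{(r−1)}, the set of upper triangular n × n matrices whose (i,j) entries vanish whenever j − i ≤ r − 1. -/

import Mathlib

/-- `A` is upper triangular. -/
def UT {K : Type*} [Field K] {n : ℕ} (A : Matrix (Fin n) (Fin n) K) : Prop :=
  ∀ i j : Fin n, (j : ℕ) < (i : ℕ) → A i j = 0

/-- `p` has zero constant term. -/
def ZeroConst {K : Type*} [Field K] {m : ℕ} (p : FreeAlgebra K (Fin m)) : Prop :=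
  FreeAlgebra.lift K (fun _ : Fin m => (0 : K)) p = 0

/-- `p` has order `r`: it vanishes on all upper triangular `r × r` matrices but not on
all upper triangular `(r+1) × (r+1)` matrices. -/
def HasOrder {K : Type*} [Field K] {m : ℕ} (p : FreeAlgebra K (Fin m)) (r : ℕ) : Prop :=
  (∀ u : Fin m → Matrix (Fin r) (Fin r) K, (∀ i, UT (u i)) →
      FreeAlgebra.lift K u p = 0) ∧
  ∃ u : Fin m → Matrix (Fin (r + 1)) (Fin (r + 1)) K, (∀ i, UT (u i)) ∧
      FreeAlgebra.lift K u p ≠ 0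

/-- The subalgebra of upper triangular matrices. -/
def UTalg (K : Type*) [Field K] (n : ℕ) : Subalgebra K (Matrix (Fin n) (Fin n) K) where
  carrier := {A | UT A}
  mul_mem' := by
    intro A B hA hB i j hij
    rw [Matrix.mul_apply]
    apply Finset.sum_eq_zero
    intro k _
    rcases le_or_gt (k : ℕ) (j : ℕ) with h | h
    · rw [hA i k (lt_of_le_of_lt h hij), zero_mul]
    · rw [hB k j h, mul_zero]
  add_mem' := by
    intro A B hA hB i j hij
    simp [Matrix.add_apply, hA i j hij, hB i j hij]
  algebraMap_mem' := by
    intro c i j hij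
    rw [Matrix.algebraMap_matrix_apply, if_neg (by intro h; rw [h] at hij; omega)]

/-- The window embedding. -/
def wind {n : ℕ} (r a : ℕ) (h : a + r ≤ n) (s : Fin r) : Fin n :=
  ⟨a + s, by have := s.isLt; omega⟩

lemma wind_inj {n : ℕ} (r a : ℕ) (h : a + r ≤ n) : Function.Injective (wind (n := n) r a h) := by
  intro s t hst
  have : a + (s : ℕ) = a + (t : ℕ) := congrArg Fin.val hst
  exact Fin.ext (by omega)

/-- Compression of an upper triangular matrix to a window of `r` consecutive indices,
as an algebra homomorphism. -/
def compress (K : Type*) [Field K] (n r a : ℕ) (h : a + r ≤ n) :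
    UTalg K n →ₐ[K] Matrix (Fin r) (Fin r) K where
  toFun A := fun s t => A.1 (wind r a h s) (wind r a h t)
  map_one' := by
    ext s t
    show ((1 : UTalg K n) : Matrix (Fin n) (Fin n) K) _ _ = (1 : Matrix (Fin r) (Fin r) K) s t
    simp only [Subalgebra.coe_one]
    by_cases hst : s = t
    · subst hst; simp [Matrix.one_apply]
    · rw [Matrix.one_apply_ne ((wind_inj r a h).ne hst), Matrix.one_apply_ne hst]
  map_mul' := by
    intro A B
    ext s t
    show (A.1 * B.1) (wind r a h s) (wind r a h t) = _
    rw [Matrix.mul_apply]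
    have emb : Fin r ↪ Fin n := ⟨wind r a h, wind_inj r a h⟩
    rw [show (Finset.univ : Finset (Fin n)) =
        (Finset.univ.map ⟨wind r a h, wind_inj r a h⟩) ∪
          ((Finset.univ : Finset (Fin n)) \ (Finset.univ.map ⟨wind r a h, wind_inj r a h⟩)) by
      simp [Finset.union_sdiff_of_subset]]
    rw [Finset.sum_union (Finset.disjoint_sdiff)]
    have hz : ∀ k ∈ (Finset.univ : Finset (Fin n)) \
        (Finset.univ.map ⟨wind r a h, wind_inj r a h⟩),
        A.1 (wind r a h s) k * B.1 k (wind r a h t) = 0 := by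
      intro k hk
      simp only [Finset.mem_sdiff, Finset.mem_map, Finset.mem_univ, true_and,
        Function.Embedding.coeFn_mk, not_exists] at hk
      have hk2 : (k : ℕ) < a ∨ a + r ≤ (k : ℕ) := by
        by_contra hc
        push_neg at hc
        exact hk ⟨(k : ℕ) - a, by omega⟩ (Fin.ext (by simp [wind]; omega))
      rcases hk2 with hk2 | hk2
      · rw [A.2 (wind r a h s) k (by simp [wind]; omega), zero_mul]
      · rw [B.2 k (wind r a h t) (by have := t.isLt; simp [wind]; omega), mul_zero]
    rw [Finset.sum_eq_zero hz, add_zero, Finset.sum_map]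
    simp [Matrix.mul_apply, wind]; rfl
  map_zero' := by ext s t; simp
  map_add' := by intro A B; ext s t; simp; rfl
  commutes' := by
    intro c
    ext s t
    show (algebraMap K (Matrix (Fin n) (Fin n) K) c) (wind r a h s) (wind r a h t) = _
    rw [Matrix.algebraMap_matrix_apply, Matrix.algebraMap_matrix_apply]
    by_cases hst : s = t
    · subst hst; simp
    · rw [if_neg ((wind_inj r a h).ne_iff.mpr hst), if_neg hst]

theorem stmt_7 {K : Type*} [Field K] (m n r : ℕ) (hm : 1 ≤ m) (hn : 2 ≤ n)
    (p : FreeAlgebra K (Fin m)) (hp : ZeroConst p)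
    (hord : HasOrder p r) (hr1 : 1 < r) (hr2 : r + 1 < n) :
    ∀ u : Fin m → Matrix (Fin n) (Fin n) K, (∀ i, UT (u i)) →
      ∀ i j : Fin n, (j : ℕ) < (i : ℕ) + r → (FreeAlgebra.lift K u p) i j = 0 := by
  intro u hu i j hij
  set v : Fin m → UTalg K n := fun k => ⟨u k, hu k⟩ with hv
  have comp_lift : ∀ {B : Type _} [Semiring B] [Algebra K B] (f : UTalg K n →ₐ[K] B),
      f.comp (FreeAlgebra.lift K v) = FreeAlgebra.lift K (fun k => f (v k)) := by
    intro B _ _ f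
    apply FreeAlgebra.hom_ext
    funext k
    simp
  have hval : FreeAlgebra.lift K u p = ((FreeAlgebra.lift K v) p).1 := by
    have := comp_lift (UTalg K n).val
    have h2 : (UTalg K n).val.comp (FreeAlgebra.lift K v) p
        = FreeAlgebra.lift K (fun k => (UTalg K n).val (v k)) p := by rw [this]
    simpa using h2.symm
  have hmem : UT (((FreeAlgebra.lift K v) p).1) := ((FreeAlgebra.lift K v) p).2
  rcases lt_or_ge (j : ℕ) (i : ℕ) with hlt | hle
  · rw [hval]; exact hmem i j hlt
  · -- window
    have hin : (i : ℕ) < n := i.isLt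
    have hjn : (j : ℕ) < n := j.isLt
    set a : ℕ := min (i : ℕ) (n - r) with ha
    have har : a + r ≤ n := by omega
    have hai : a ≤ (i : ℕ) := by omega
    have hia : (i : ℕ) < a + r := by omega
    have hja : (j : ℕ) < a + r := by omega
    set φ := compress K n r a har with hφ
    have hUTc : ∀ k, UT (φ (v k)) := by
      intro k s t hst
      exact (v k).2 (wind r a har s) (wind r a har t) (by simp [wind]; omega)
    have hzero : FreeAlgebra.lift K (fun k => φ (v k)) p = 0 := hord.1 _ hUTc
    have hcz : φ ((FreeAlgebra.lift K v) p) = 0 := by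
      have := comp_lift φ
      have h2 : φ.comp (FreeAlgebra.lift K v) p = FreeAlgebra.lift K (fun k => φ (v k)) p := by
        rw [this]
      rw [AlgHom.comp_apply] at h2
      rw [h2, hzero]
    have hs : (⟨(i : ℕ) - a, by omega⟩ : Fin r) = ⟨(i : ℕ) - a, by omega⟩ := rfl
    have hentry : φ ((FreeAlgebra.lift K v) p) ⟨(i : ℕ) - a, by omega⟩ ⟨(j : ℕ) - a, by omega⟩
        = ((FreeAlgebra.lift K v) p).1 i j := by
      show ((FreeAlgebra.lift K v) p).1 (wind r a har _) (wind r a har _) = _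
      have e1 : wind r a har ⟨(i : ℕ) - a, by omega⟩ = i :=
        Fin.ext (show a + ((i : ℕ) - a) = (i : ℕ) by omega)
      have e2 : wind r a har ⟨(j : ℕ) - a, by omega⟩ = j :=
        Fin.ext (show a + ((j : ℕ) - a) = (j : ℕ) by omega)
      rw [e1, e2]
    rw [hval, ← hentry, hcz]
    simp
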